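/- arXiv:1008.3210 — 2 statements merged into one kernel-verified Lean document; each statement's English description precedes it below -/
import Mathlib

section
/- Let M be a von Neumann algebra, a ≥ 0 in M with support projection s(a) = 1, and u a unitary in M such that |u*au − a| ≥ a. Let e₊ be the support of the positive part (u*au − a)₊ and e₋ = 1 − e₊. Then e₋ u* a u e₋ = 0, and consequently e₊ = 1 and u*au ≥ 2a. -/
open scoped ComplexOrder

variable {H : Type*} [NormedAddCommGroup H] [InnerProductSpace ℂ H] [CompleteSpace H]

namespace CommutatorEstimates

/-- `p` is an (orthogonal) projection belonging to the von Neumann algebra `M`. -/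
def IsProj (M : VonNeumannAlgebra H) (p : H →L[ℂ] H) : Prop :=
  p ∈ M ∧ IsSelfAdjoint p ∧ p * p = p

/-- Order on projections: `p ≤ q` iff `p * q = p`. -/
def ProjLE (p q : H →L[ℂ] H) : Prop := p * q = p

/-- Strict order on projections. -/
def ProjLT (p q : H →L[ℂ] H) : Prop := ProjLE p q ∧ p ≠ q

/-- Murray–von Neumann equivalence of projections relative to `M`:
there is a partial isometry `v ∈ M` with `v*v = p` and `vv* = q`. -/
def MvNE (M : VonNeumannAlgebra H) (p q : H →L[ℂ] H) : Prop :=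
  ∃ v ∈ M, star v * v = p ∧ v * star v = q

/-- Murray–von Neumann subequivalence: `p` is equivalent to a subprojection of `q`. -/
def SubEquiv (M : VonNeumannAlgebra H) (p q : H →L[ℂ] H) : Prop :=
  ∃ r, IsProj M r ∧ ProjLE r q ∧ MvNE M p r

/-- Strict Murray–von Neumann subequivalence. -/
def StrictSubEquiv (M : VonNeumannAlgebra H) (p q : H →L[ℂ] H) : Prop :=
  SubEquiv M p q ∧ ¬ MvNE M p q

/-- `M` is a factor: its center reduces to the scalars. -/
def IsFactor (M : VonNeumannAlgebra H) : Prop :=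
  ∀ z ∈ M, (∀ y ∈ M, z * y = y * z) → ∃ c : ℂ, z = c • (1 : H →L[ℂ] H)

/-- An infinite projection: equivalent to a proper subprojection of itself. -/
def InfiniteProj (M : VonNeumannAlgebra H) (p : H →L[ℂ] H) : Prop :=
  IsProj M p ∧ ∃ q, IsProj M q ∧ ProjLE q p ∧ q ≠ p ∧ MvNE M p q

/-- The absolute value `|x| = (x*x)^{1/2}` of a bounded operator. -/
noncomputable def oabs (x : H →L[ℂ] H) : H →L[ℂ] H := CFC.sqrt (star x * x)

end CommutatorEstimates

namespace CommutatorEstimates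

/-- The positive part `x₊ = (|x| + x)/2` of an operator. -/
noncomputable def posPart' (x : H →L[ℂ] H) : H →L[ℂ] H := (2 : ℂ)⁻¹ • (oabs x + x)


set_option maxHeartbeats 1000000
set_option synthInstance.maxHeartbeats 400000

open scoped InnerProductSpace

lemma quad_zero (T : H →L[ℂ] H) (hT : 0 ≤ T) (ξ : H)
    (h : RCLike.re (⟪T ξ, ξ⟫_ℂ) ≤ 0) : T ξ = 0 := by
  have hss : CFC.sqrt T * CFC.sqrt T = T := CFC.sqrt_mul_sqrt_self T hT
  have hsa : IsSelfAdjoint (CFC.sqrt T) := (CFC.sqrt_nonneg (a := T)).isSelfAdjoint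
  have hsym := ContinuousLinearMap.isSelfAdjoint_iff_isSymmetric.mp hsa
  have h1 : (⟪T ξ, ξ⟫_ℂ) = ⟪CFC.sqrt T ξ, CFC.sqrt T ξ⟫_ℂ := by
    conv_lhs => rw [← hss]
    exact (hsym (CFC.sqrt T ξ) ξ)
  have h2 : CFC.sqrt T ξ = 0 := by
    rw [h1] at h
    exact re_inner_self_nonpos.mp h
  rw [← hss, ContinuousLinearMap.mul_apply, h2, map_zero]

lemma conj_ker (a u : H →L[ℂ] H) (ha0 : 0 ≤ a)
    (hsupp : ∀ ξ : H, a ξ = 0 → ξ = 0) (hu1 : star u * u = 1)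
    (ξ : H) (h : (star u * a * u) ξ = 0) : ξ = 0 := by
  have h2 : (⟪a (u ξ), u ξ⟫_ℂ) = 0 := by
    have h3 : star u ((a (u ξ))) = 0 := by
      simpa [ContinuousLinearMap.mul_apply] using h
    rw [← ContinuousLinearMap.adjoint_inner_left, ← ContinuousLinearMap.star_eq_adjoint, h3,
      inner_zero_left]
  have h4 : a (u ξ) = 0 := quad_zero a ha0 (u ξ) (by rw [h2]; simp)
  have h5 : u ξ = 0 := hsupp _ h4
  calc ξ = (star u * u) ξ := by rw [hu1]; simp
  _ = star u (u ξ) := rfl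
  _ = 0 := by rw [h5, map_zero]

/-- **Support argument.** Let `a ≥ 0` in `M` with full support, `u ∈ M` unitary with
`|u*au − a| ≥ a`, and let `e₊` be the support projection of `(u*au − a)₊`,
`e₋ = 1 − e₊`.  Then `e₋ u*au e₋ = 0`, hence `e₊ = 1` and `u*au ≥ 2a`. -/
theorem support_argument
    {H : Type*} [NormedAddCommGroup H] [InnerProductSpace ℂ H] [CompleteSpace H]
    (M : VonNeumannAlgebra H)
    (a : H →L[ℂ] H) (haM : a ∈ M) (ha0 : 0 ≤ a)
    -- the support projection of `a` is `1`, i.e. `a` has trivial kernel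
    (hsupp : ∀ ξ : H, a ξ = 0 → ξ = 0)
    (u : H →L[ℂ] H) (huM : u ∈ M) (hu1 : star u * u = 1) (hu2 : u * star u = 1)
    (habs : a ≤ oabs (star u * a * u - a))
    -- `ep` is the support projection of `(u*au − a)₊`
    (ep : H →L[ℂ] H) (hep : IsProj M ep)
    (hps : posPart' (star u * a * u - a) * ep = posPart' (star u * a * u - a))
    (hmin : ∀ f, IsProj M f →
      posPart' (star u * a * u - a) * f = posPart' (star u * a * u - a) →
      ProjLE ep f) :
    (1 - ep) * (star u * a * u) * (1 - ep) = 0 ∧ ep = 1 ∧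
      (2 : ℂ) • a ≤ star u * a * u := by
  set T := star u * a * u with hT_def
  set b := T - a with hb_def
  have haSA : IsSelfAdjoint a := ha0.isSelfAdjoint
  have hbSA : IsSelfAdjoint b := (haSA.conjugate' u).sub haSA
  have hT0 : 0 ≤ T := star_left_conjugate_nonneg ha0 u
  have hTba : b + a = T := sub_add_cancel T a
  set p := b⁺ with hp_def
  set n := b⁻ with hn_def
  have hpn : p * n = 0 := CFC.posPart_mul_negPart b
  have hnp : n * p = 0 := CFC.negPart_mul_posPart b
  have hb : p - n = b := CFC.posPart_sub_negPart b hbSA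
  have hp0 : 0 ≤ p := CFC.posPart_nonneg b
  have hn0 : 0 ≤ n := CFC.negPart_nonneg b
  have hsum : oabs b = p + n := by
    have e1 : b * b = (p + n) * (p + n) := by
      rw [← hb]
      simp only [sub_mul, mul_sub, add_mul, mul_add, hpn, hnp]
      abel
    rw [oabs, hbSA.star_eq, e1, ← sq,
      CFC.sqrt_sq (p + n) (add_nonneg hp0 hn0)]
  have hpp : posPart' b = p := by
    rw [posPart', hsum]
    have e2 : p + n + b = (2 : ℂ) • p := by rw [← hb, two_smul]; abel
    rw [e2, smul_smul]
    norm_num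
  rw [hpp] at hps
  have kerP : ∀ ξ : H, p ξ = 0 → ξ = 0 := by
    intro ξ hξ
    have hbξ : b ξ = -(n ξ) := by
      rw [← hb]; simp [ContinuousLinearMap.sub_apply, hξ]
    have hc : 0 ≤ p + n - a := by rw [← hsum]; exact sub_nonneg.mpr habs
    have hc' := ((ContinuousLinearMap.nonneg_iff_isPositive _).mp hc).inner_nonneg_left ξ
    have e3 : (p + n - a) ξ = n ξ - a ξ := by
      simp [ContinuousLinearMap.sub_apply, ContinuousLinearMap.add_apply, hξ]
    rw [e3, inner_sub_left] at hc'
    replace hc' : (0:ℝ) ≤ RCLike.re (⟪n ξ, ξ⟫_ℂ - ⟪a ξ, ξ⟫_ℂ) := (Complex.le_def.mp hc').1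
    rw [map_sub] at hc'
    have hTle : RCLike.re (⟪T ξ, ξ⟫_ℂ) ≤ 0 := by
      have e4 : T ξ = a ξ - n ξ := by
        rw [← hTba]; simp [ContinuousLinearMap.add_apply, hbξ]; abel
      rw [e4, inner_sub_left, map_sub]
      linarith
    exact conj_ker a u ha0 hsupp hu1 ξ (quad_zero T hT0 ξ hTle)
  set q : H →L[ℂ] H := 1 - ep with hq_def
  have hqSA : IsSelfAdjoint q := (IsSelfAdjoint.one (H →L[ℂ] H)).sub hep.2.1
  have hpSA : IsSelfAdjoint p := hp0.isSelfAdjoint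
  have hpq : p * q = 0 := by rw [hq_def, mul_sub, mul_one, hps, sub_self]
  have hqp : q * p = 0 := by
    have := congrArg star hpq
    simpa [star_mul, hqSA.star_eq, hpSA.star_eq] using this
  have goal1 : q * T * q = 0 := by
    refine le_antisymm ?_ ?_
    · have h1 : q * a * q ≤ q * (p + n) * q := by
        have h1' : a ≤ p + n := hsum ▸ habs
        have := star_left_conjugate_le_conjugate h1' q
        rwa [hqSA.star_eq] at this
      have h2 : q * T * q = q * a * q + q * b * q := by
        rw [← hTba]; noncomm_ring
      have h3 : q * (p + n) * q + q * b * q = 0 := by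
        have e5 : (p + n) + b = (2 : ℂ) • p := by rw [← hb, two_smul]; abel
        calc q * (p + n) * q + q * b * q = q * ((p + n) + b) * q := by noncomm_ring
        _ = q * ((2 : ℂ) • p) * q := by rw [e5]
        _ = (2 : ℂ) • (q * p * q) := by noncomm_ring
        _ = 0 := by rw [hqp, zero_mul, smul_zero]
      calc q * T * q = q * a * q + q * b * q := h2
      _ ≤ q * (p + n) * q + q * b * q := add_le_add h1 le_rfl
      _ = 0 := h3
    · have := star_left_conjugate_nonneg hT0 q
      rwa [hqSA.star_eq] at this
  have hq0 : q = 0 := by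
    ext ξ
    have hsymq := ContinuousLinearMap.isSelfAdjoint_iff_isSymmetric.mp hqSA
    have h1 : (⟪T (q ξ), q ξ⟫_ℂ) = 0 := by
      have e6 : q (T (q ξ)) = (q * T * q) ξ := rfl
      calc (⟪T (q ξ), q ξ⟫_ℂ) = ⟪q (T (q ξ)), ξ⟫_ℂ := (hsymq (T (q ξ)) ξ).symm
      _ = 0 := by rw [e6, goal1]; simp
    have h2 : T (q ξ) = 0 := quad_zero T hT0 (q ξ) (by rw [h1]; simp)
    have h3 : q ξ = 0 := conj_ker a u ha0 hsupp hu1 _ h2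
    simpa using h3
  have hep1 : ep = 1 := by
    have := hq0
    rw [hq_def, sub_eq_zero] at this
    exact this.symm
  refine ⟨goal1, hep1, ?_⟩
  have hn_zero : n = 0 := by
    ext ξ
    have h1 : p (n ξ) = 0 := by
      rw [← ContinuousLinearMap.mul_apply, hpn]; simp
    simpa using kerP (n ξ) h1
  have hb_eq : b = p := by rw [← hb, hn_zero, sub_zero]
  have hfin : a ≤ T - a := by
    calc a ≤ oabs b := habs
    _ = p + n := hsum
    _ = b := by rw [hb_eq, hn_zero, add_zero]
    _ = T - a := hb_def
  rw [two_smul]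
  exact add_le_of_le_sub_right hfin


end CommutatorEstimates
end

section
/- Let M be a von Neumann algebra and a ≥ 0 a nonzero bounded element with support projection s(a) = 1. Then there is no unitary u ∈ M with |u*au − a| ≥ a. -/
open scoped ComplexOrder

variable {H : Type*} [NormedAddCommGroup H] [InnerProductSpace ℂ H] [CompleteSpace H]

namespace CommutatorEstimates

lemma aux_abs {H : Type*} [NormedAddCommGroup H] [InnerProductSpace ℂ H] [CompleteSpace H]
    (b : H →L[ℂ] H) (hbsa : IsSelfAdjoint b) : oabs b = b + (b⁻ + b⁻) := by
  have h1 : b⁺ * b⁻ = 0 := CFC.posPart_mul_negPart b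
  have h2 : b⁻ * b⁺ = 0 := CFC.negPart_mul_posPart b
  have hp0 : 0 ≤ b⁺ := CFC.posPart_nonneg b
  have hn0 : 0 ≤ b⁻ := CFC.negPart_nonneg b
  have h : b⁺ - b⁻ = b := CFC.posPart_sub_negPart b hbsa
  obtain ⟨p, hp⟩ : ∃ p, p = b⁺ := ⟨_, rfl⟩
  obtain ⟨n, hn⟩ : ∃ n, n = b⁻ := ⟨_, rfl⟩
  rw [← hp, ← hn] at h1 h2 h
  rw [← hp] at hp0
  rw [← hn] at hn0 ⊢
  have key : oabs b = p + n := by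
    rw [oabs, hbsa.star_eq, ← h]
    refine CFC.sqrt_unique ?_ (add_nonneg hp0 hn0)
    rw [mul_add, add_mul, add_mul, h1, h2, mul_sub, sub_mul, sub_mul, h1, h2]
    noncomm_ring
  rw [key, ← h]
  abel

lemma aux_negPart_mul {H : Type*} [NormedAddCommGroup H] [InnerProductSpace ℂ H] [CompleteSpace H]
    (b : H →L[ℂ] H) (hbsa : IsSelfAdjoint b) : b⁻ * b = -(b⁻ * b⁻) := by
  have h2 : b⁻ * b⁺ = 0 := CFC.negPart_mul_posPart b
  have h : b⁺ - b⁻ = b := CFC.posPart_sub_negPart b hbsa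
  obtain ⟨n, hn⟩ : ∃ n, n = b⁻ := ⟨_, rfl⟩
  rw [← hn] at h2 h
  rw [← hn]
  rw [← h, mul_sub, h2, zero_sub]

set_option maxHeartbeats 1000000 in
/-- **No unitary improves on a fully supported positive element.** If `a ≥ 0`,
`a ≠ 0`, has support projection `1` in the von Neumann algebra `M`, then no unitary
`u ∈ M` satisfies `|u*au − a| ≥ a`. -/
theorem no_unitary_dominates
    {H : Type*} [NormedAddCommGroup H] [InnerProductSpace ℂ H] [CompleteSpace H]
    (M : VonNeumannAlgebra H)
    (a : H →L[ℂ] H) (haM : a ∈ M) (ha0 : 0 ≤ a) (hane : a ≠ 0)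
    -- the support projection of `a` is `1`, i.e. `a` has trivial kernel
    (hsupp : ∀ ξ : H, a ξ = 0 → ξ = 0) :
    ¬ ∃ u ∈ M, star u * u = 1 ∧ u * star u = 1 ∧
        a ≤ oabs (star u * a * u - a) := by
  rintro ⟨u, -, huu, huu', hle⟩
  have hasa : IsSelfAdjoint a := ha0.isSelfAdjoint
  have hbsa : IsSelfAdjoint (star u * a * u - a) := (hasa.conjugate' u).sub hasa
  obtain ⟨b, hbdef⟩ : ∃ b, b = star u * a * u - a := ⟨_, rfl⟩
  rw [← hbdef] at hle hbsa
  have habs' : oabs b = b + (b⁻ + b⁻) := aux_abs b hbsa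
  have hcbmul : b⁻ * b = -(b⁻ * b⁻) := aux_negPart_mul b hbsa
  have hc0 : (0 : H →L[ℂ] H) ≤ b⁻ := CFC.negPart_nonneg b
  obtain ⟨c, hcdef⟩ : ∃ c, c = b⁻ := ⟨_, rfl⟩
  rw [← hcdef] at habs' hcbmul hc0
  have hcsa : IsSelfAdjoint c := hc0.isSelfAdjoint
  have hcb : c * b * c = -(c * c * c) := by rw [hcbmul, neg_mul]
  -- conjugate `a ≤ |b|` by `c`
  have hconj : c * a * c ≤ c * oabs b * c := by
    have h := star_left_conjugate_le_conjugate hle c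
    rwa [hcsa.star_eq] at h
  have hconj' : c * a * c ≤ c * c * c := by
    have h2 : c * (b + (c + c)) * c = c * b * c + (c * c * c + c * c * c) := by
      noncomm_ring
    rw [habs', h2, hcb] at hconj
    have h3 : -(c * c * c) + (c * c * c + c * c * c) = c * c * c := by abel
    rwa [h3] at hconj
  have hkey : c * (star u * a * u) * c = c * a * c - c * c * c := by
    have hb' : c * (star u * a * u) * c - c * a * c = c * b * c := by
      rw [hbdef]; noncomm_ring
    rw [hcb] at hb'
    linear_combination (norm := noncomm_ring) hb'
  have hle0 : c * (star u * a * u) * c ≤ 0 := by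
    rw [hkey, sub_nonpos]; exact hconj'
  have hge0 : (0 : H →L[ℂ] H) ≤ c * (star u * a * u) * c := by
    have h := star_left_conjugate_nonneg ha0 (u * c)
    have heq : star (u * c) * a * (u * c) = c * (star u * a * u) * c := by
      rw [star_mul, hcsa.star_eq]; noncomm_ring
    rwa [heq] at h
  have hzero : c * (star u * a * u) * c = 0 := le_antisymm hle0 hge0
  -- deduce `c = 0` from full support of `a`
  have hcz : c = 0 := by
    have hs0 : (0 : H →L[ℂ] H) ≤ CFC.sqrt a := CFC.sqrt_nonneg a
    have hss : CFC.sqrt a * CFC.sqrt a = a := CFC.sqrt_mul_sqrt_self a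
    obtain ⟨s, hsdef⟩ : ∃ s, s = CFC.sqrt a := ⟨_, rfl⟩
    rw [← hsdef] at hs0 hss
    have hx : star (s * (u * c)) * (s * (u * c)) = c * (star u * a * u) * c := by
      rw [star_mul, hs0.isSelfAdjoint.star_eq, star_mul, hcsa.star_eq, ← hss]
      noncomm_ring
    have hsx : s * (u * c) = 0 := by
      rw [← CStarRing.star_mul_self_eq_zero_iff, hx, hzero]
    have hax : a * (u * c) = 0 := by rw [← hss, mul_assoc, hsx, mul_zero]
    ext ξ
    have h1 : a (u (c ξ)) = 0 := by
      have h := congrArg (fun T : H →L[ℂ] H => T ξ) hax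
      simpa [ContinuousLinearMap.mul_apply] using h
    have h2 : u (c ξ) = 0 := hsupp _ h1
    have h3 : (star u) (u (c ξ)) = c ξ := by
      have h := congrArg (fun T : H →L[ℂ] H => T (c ξ)) huu
      simpa [ContinuousLinearMap.mul_apply] using h
    rw [h2, map_zero] at h3
    simp [← h3]
  -- with `c = 0`, conclude `2a ≤ u*au` and contradict norms
  have hble : a ≤ b := by
    rw [habs', hcz] at hle; simpa using hle
  have h2a : a + a ≤ star u * a * u := by
    have h := add_le_add_left hble a
    rwa [hbdef, sub_add_cancel] at h
  have hnorm1 : ‖a + a‖ ≤ ‖star u * a * u‖ :=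
    CStarAlgebra.norm_le_norm_of_nonneg_of_le (by positivity) h2a
  have hu : ‖u‖ ≤ 1 := by
    have h1 : ‖star u * u‖ = ‖u‖ * ‖u‖ := CStarRing.norm_star_mul_self
    rw [huu] at h1
    have h2 : ‖(1 : H →L[ℂ] H)‖ ≤ 1 := ContinuousLinearMap.norm_id_le
    nlinarith [norm_nonneg u]
  have hnorm2 : ‖star u * a * u‖ ≤ ‖a‖ := by
    calc ‖star u * a * u‖ ≤ ‖star u * a‖ * ‖u‖ := norm_mul_le _ _
      _ ≤ ‖star u‖ * ‖a‖ * ‖u‖ := by gcongr; exact norm_mul_le _ _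
      _ ≤ 1 * ‖a‖ * 1 := by gcongr <;> simp [norm_star, hu]
      _ = ‖a‖ := by ring
  have h2aa : ‖a + a‖ = 2 * ‖a‖ := by
    rw [← two_smul ℝ a, norm_smul]; simp
  have hfin : ‖a‖ ≤ 0 := by rw [h2aa] at hnorm1; linarith [hnorm1.trans hnorm2]
  exact hane (by simpa using le_antisymm hfin (norm_nonneg a))

end CommutatorEstimates
end
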